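/- For the 3D Rayleigh secular equation ξ⁶ − 8ξ⁴ + 8ξ²(3 − 6/(3h+4)) − 16(1 − 3/(3h+4)) = 0 with h = B₃D/μ₃D ≥ 0, at h = 0 the equation becomes ξ⁶ − 8ξ⁴ + 12ξ² − 4 = 0, which has a root ξ with 0 < ξ² < 1; in particular, unlike the 2D case, the 3D Rayleigh wavespeed does not vanish in the limit of zero bulk modulus. -/
import Mathlib

lemma cubic_root_exists : ∃ x : ℝ, 0 < x ∧ x < 1 ∧ x ^ 3 - 8 * x ^ 2 + 12 * x - 4 = 0 := by
  have hcont : ContinuousOn (fun x : ℝ => x ^ 3 - 8 * x ^ 2 + 12 * x - 4) (Set.Icc 0 1) := by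
    fun_prop
  have h01 : (0:ℝ) ≤ 1 := by norm_num
  have := intermediate_value_Icc h01 hcont
  have hmem : (0:ℝ) ∈ Set.Icc ((fun x : ℝ => x ^ 3 - 8 * x ^ 2 + 12 * x - 4) 0)
      ((fun x : ℝ => x ^ 3 - 8 * x ^ 2 + 12 * x - 4) 1) := by
    simp only
    norm_num
  obtain ⟨x, hx, hfx⟩ := this hmem
  refine ⟨x, ?_, ?_, hfx⟩
  · rcases lt_or_eq_of_le hx.1 with h | h
    · exact h
    · exfalso; rw [← h] at hfx; norm_num at hfx
  · rcases lt_or_eq_of_le hx.2 with h | h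
    · exact h
    · exfalso; rw [h] at hfx; norm_num at hfx

/-- At `h = B₃D/μ₃D = 0` the 3D Rayleigh secular equation
`ξ⁶ − 8ξ⁴ + 8ξ²(3 − 6/(3h+4)) − 16(1 − 3/(3h+4)) = 0` becomes
`ξ⁶ − 8ξ⁴ + 12ξ² − 4 = 0`, which has a root with `0 < ξ² < 1`: the 3D Rayleigh
wavespeed does not vanish at zero bulk modulus. -/
theorem rayleigh_3d_secular_at_zero_bulk :
    (∀ ξ : ℝ,
      ξ ^ 6 - 8 * ξ ^ 4 + 8 * ξ ^ 2 * (3 - 6 / (3 * 0 + 4)) - 16 * (1 - 3 / (3 * 0 + 4))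
        = ξ ^ 6 - 8 * ξ ^ 4 + 12 * ξ ^ 2 - 4) ∧
    (∃ ξ : ℝ, 0 < ξ ^ 2 ∧ ξ ^ 2 < 1 ∧
      ξ ^ 6 - 8 * ξ ^ 4 + 12 * ξ ^ 2 - 4 = 0) := by
  constructor
  · intro ξ; norm_num; ring
  · obtain ⟨x, hx0, hx1, hx⟩ := cubic_root_exists
    have hs : Real.sqrt x ^ 2 = x := Real.sq_sqrt hx0.le
    refine ⟨Real.sqrt x, by rw [hs]; exact hx0, by rw [hs]; exact hx1, ?_⟩
    have h6 : Real.sqrt x ^ 6 = x ^ 3 := by rw [show (6:ℕ)=2*3 from rfl, pow_mul, hs]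
    have h4 : Real.sqrt x ^ 4 = x ^ 2 := by rw [show (4:ℕ)=2*2 from rfl, pow_mul, hs]
    rw [h6, h4, hs]; exact hx
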